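/- With the notation of the linear MGT energy identity (τ u''' + u'' + c²Au + bAu' = f with f(t) ∈ H continuous), the perturbed identity holds: (d/dt)E₁(t) + γ‖u''(t)‖² = (f(t), u''(t) + (c²/b)u'(t)) for all t ∈ [0,T], where γ = 1 − τc²/b and E₁ is as defined above. -/

import Mathlib

open Set RealInnerProductSpace

/-- Energy identity for the linear MGT equation `τu''' + u'' + c²Au + bAu' = f`:
with `E₁` as below one has `(d/dt)E₁(t) + γ‖u''(t)‖² = (f, u'' + (c²/b)u')`, `γ = 1 − τc²/b`.
`A` is a positive symmetric operator and `Asq` plays the role of `A^{1/2}`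
(symmetric, positive, with `Asq ∘ Asq = A`). -/
theorem stmt_10 {H : Type*} [NormedAddCommGroup H] [InnerProductSpace ℝ H]
    [CompleteSpace H]
    (A Asq : H →ₗ[ℝ] H)
    (hAsym : ∀ u v : H, ⟪A u, v⟫ = ⟪u, A v⟫)
    (hApos : ∀ u : H, 0 ≤ ⟪A u, u⟫)
    (hAsqSym : ∀ u v : H, ⟪Asq u, v⟫ = ⟪u, Asq v⟫)
    (hAsqPos : ∀ u : H, 0 ≤ ⟪Asq u, u⟫)
    (hAsqSq : ∀ u : H, Asq (Asq u) = A u)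
    (τ b csq : ℝ) (hτ : 0 < τ) (hb : 0 < b) (hcsq : 0 < csq)
    (T : ℝ) (hT : 0 < T)
    (u u1 u2 u3 : ℝ → H)
    (hu : ∀ t, HasDerivAt u (u1 t) t)
    (hu1 : ∀ t, HasDerivAt u1 (u2 t) t)
    (hu2 : ∀ t, HasDerivAt u2 (u3 t) t)
    (hu3c : Continuous u3)
    (f : ℝ → H) (hf : Continuous f)
    (heq : ∀ t ∈ Icc (0:ℝ) T,
      τ • u3 t + u2 t + csq • A (u t) + b • A (u1 t) = f t) :
    ∀ t ∈ Icc (0:ℝ) T,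
      HasDerivAt (fun s =>
          τ / 2 * ‖u2 s‖ ^ 2 + b / 2 * ‖Asq (u1 s)‖ ^ 2 + csq * ⟪A (u s), u1 s⟫ +
          csq ^ 2 / (2 * b) * ‖Asq (u s)‖ ^ 2 + (τ * csq / b) * ⟪u2 s, u1 s⟫ +
          csq / (2 * b) * ‖u1 s‖ ^ 2)
        (-(1 - τ * csq / b) * ‖u2 t‖ ^ 2 + ⟪f t, u2 t + (csq / b) • u1 t⟫) t := by
  have hAcont : Continuous A := (LinearMap.IsSymmetric.continuous hAsym)
  have hAsqcont : Continuous Asq := (LinearMap.IsSymmetric.continuous hAsqSym)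
  set Ac : H →L[ℝ] H := ⟨A, hAcont⟩ with hAc
  set Asqc : H →L[ℝ] H := ⟨Asq, hAsqcont⟩ with hAsqc
  have hAd : ∀ (v v' : ℝ → H), (∀ t, HasDerivAt v (v' t) t) →
      ∀ t, HasDerivAt (fun s => A (v s)) (A (v' t)) t := fun v v' hv t =>
    (Ac.hasFDerivAt.comp_hasDerivAt t (hv t))
  have hAsqd : ∀ (v v' : ℝ → H), (∀ t, HasDerivAt v (v' t) t) →
      ∀ t, HasDerivAt (fun s => Asq (v s)) (Asq (v' t)) t := fun v v' hv t =>
    (Asqc.hasFDerivAt.comp_hasDerivAt t (hv t))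
  intro t ht
  have key : (fun s => τ / 2 * ‖u2 s‖ ^ 2 + b / 2 * ‖Asq (u1 s)‖ ^ 2 + csq * ⟪A (u s), u1 s⟫ +
          csq ^ 2 / (2 * b) * ‖Asq (u s)‖ ^ 2 + (τ * csq / b) * ⟪u2 s, u1 s⟫ +
          csq / (2 * b) * ‖u1 s‖ ^ 2)
      = (fun s => τ / 2 * ⟪u2 s, u2 s⟫ + b / 2 * ⟪Asq (u1 s), Asq (u1 s)⟫ +
          csq * ⟪A (u s), u1 s⟫ + csq ^ 2 / (2 * b) * ⟪Asq (u s), Asq (u s)⟫ +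
          (τ * csq / b) * ⟪u2 s, u1 s⟫ + csq / (2 * b) * ⟪u1 s, u1 s⟫) := by
    funext s; simp [real_inner_self_eq_norm_sq]
  rw [key]
  have h1 := (((hu2 t).inner ℝ (hu2 t)).const_mul (τ / 2))
  have h2 := (((hAsqd u1 u2 hu1 t).inner ℝ (hAsqd u1 u2 hu1 t)).const_mul (b / 2))
  have h3 := (((hAd u u1 hu t).inner ℝ (hu1 t)).const_mul csq)
  have h4 := (((hAsqd u u1 hu t).inner ℝ (hAsqd u u1 hu t)).const_mul (csq ^ 2 / (2 * b)))
  have h5 := (((hu2 t).inner ℝ (hu1 t)).const_mul (τ * csq / b))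
  have h6 := (((hu1 t).inner ℝ (hu1 t)).const_mul (csq / (2 * b)))
  have hD := ((((h1.add h2).add h3).add h4).add h5).add h6
  refine hD.congr_deriv (Eq.symm ?_)
  -- now prove the scalar identity
  have hf' : ∀ v : H, ⟪f t, v⟫ = τ * ⟪u3 t, v⟫ + ⟪u2 t, v⟫ + csq * ⟪A (u t), v⟫ +
      b * ⟪A (u1 t), v⟫ := by
    intro v
    rw [← heq t ht]
    simp [inner_add_left, real_inner_smul_left]
  have hAsq2 : ∀ x y : H, ⟪Asq x, Asq y⟫ = ⟪A x, y⟫ := by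
    intro x y
    rw [hAsqSym x (Asq y), hAsqSq, ← hAsym]
  have c1 : ⟪u2 t, u3 t⟫ = ⟪u3 t, u2 t⟫ := real_inner_comm _ _
  have c2 : ⟪A (u2 t), u1 t⟫ = ⟪A (u1 t), u2 t⟫ := by rw [hAsym, real_inner_comm]
  have c4 : ⟪u1 t, u2 t⟫ = ⟪u2 t, u1 t⟫ := real_inner_comm _ _
  have c5 : ⟪A (u1 t), u t⟫ = ⟪A (u t), u1 t⟫ := by rw [hAsym, real_inner_comm]
  have c6 : ⟪u1 t, u3 t⟫ = ⟪u3 t, u1 t⟫ := real_inner_comm _ _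
  simp only [hAsq2, inner_add_right, real_inner_smul_right, hf', real_inner_self_eq_norm_sq,
    c1, c2, c4, c5, c6]
  rw [← real_inner_self_eq_norm_sq]
  field_simp
  ring
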